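/- Monotonicity of the transplanted integrand outside the ball: let n ≥ 2 and α ≤ 0, and set h(r) = C·(−α² + (n−1)(1+αr)/r²)·e^{−2α(r−1)} for r ≥ 1, where C > 0. Then h is strictly decreasing on [1,∞); indeed h′(r) = C·(2α³ − (2(n−1)/r³)·[(1+αr)² − αr/2])·e^{−2α(r−1)} < 0 for r ≥ 1. -/

import Mathlib

theorem integrand_decreasing_outside_ball (n : ℕ) (hn : 2 ≤ n) (α : ℝ) (hα : α ≤ 0)
    (C : ℝ) (hC : 0 < C)
    (h : ℝ → ℝ)
    (hdef : ∀ r : ℝ, h r =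
      C * (-α ^ 2 + (n - 1) * (1 + α * r) / r ^ 2) * Real.exp (-2 * α * (r - 1))) :
    (∀ r : ℝ, 1 ≤ r →
      deriv h r = C * (2 * α ^ 3 - (2 * (n - 1) / r ^ 3) * ((1 + α * r) ^ 2 - α * r / 2)) *
        Real.exp (-2 * α * (r - 1)) ∧ deriv h r < 0) ∧
    StrictAntiOn h (Set.Ici (1 : ℝ)) := by
  have hfun : h = fun r => C * (-α ^ 2 + (n - 1) * (1 + α * r) / r ^ 2) *
      Real.exp (-2 * α * (r - 1)) := funext hdef
  have key : ∀ r : ℝ, r ≠ 0 →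
      HasDerivAt h (C * (2 * α ^ 3 - (2 * (n - 1) / r ^ 3) * ((1 + α * r) ^ 2 - α * r / 2)) *
        Real.exp (-2 * α * (r - 1))) r := by
    intro r hr
    have hnum : HasDerivAt (fun r : ℝ => ((n : ℝ) - 1) * (1 + α * r)) (((n : ℝ) - 1) * α) r := by
      simpa using (((hasDerivAt_id r).const_mul α).const_add 1).const_mul ((n : ℝ) - 1)
    have hden : HasDerivAt (fun r : ℝ => r ^ 2) (2 * r) r := by
      simpa using hasDerivAt_pow 2 r
    have hq : HasDerivAt (fun r : ℝ => ((n : ℝ) - 1) * (1 + α * r) / r ^ 2)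
        ((((n : ℝ) - 1) * α * r ^ 2 - ((n : ℝ) - 1) * (1 + α * r) * (2 * r)) / (r ^ 2) ^ 2) r :=
      hnum.div hden (pow_ne_zero 2 hr)
    have hA : HasDerivAt (fun r : ℝ => -α ^ 2 + ((n : ℝ) - 1) * (1 + α * r) / r ^ 2)
        ((((n : ℝ) - 1) * α * r ^ 2 - ((n : ℝ) - 1) * (1 + α * r) * (2 * r)) / (r ^ 2) ^ 2) r :=
      hq.const_add _
    have hE : HasDerivAt (fun r : ℝ => Real.exp (-2 * α * (r - 1)))
        (Real.exp (-2 * α * (r - 1)) * (-2 * α)) r := by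
      have h0 : HasDerivAt (fun r : ℝ => -2 * α * (r - 1)) (-2 * α) r := by
        simpa using ((hasDerivAt_id r).sub_const 1).const_mul (-2 * α)
      exact h0.exp
    have hm := ((hA.const_mul C).mul hE)
    rw [hfun]
    refine hm.congr_deriv ?_
    have hr3 : r ^ 3 ≠ 0 := pow_ne_zero 3 hr
    field_simp
    ring
  constructor
  · intro r hr
    have hr0 : (0 : ℝ) < r := lt_of_lt_of_le one_pos hr
    have hd := (key r (ne_of_gt hr0)).deriv
    refine ⟨hd, ?_⟩
    rw [hd]
    have hbr : 2 * α ^ 3 - (2 * ((n : ℝ) - 1) / r ^ 3) * ((1 + α * r) ^ 2 - α * r / 2) < 0 := by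
      have hpos : 0 < (1 + α * r) ^ 2 - α * r / 2 := by
        rcases eq_or_lt_of_le hα with heq | hlt
        · subst heq; norm_num
        · nlinarith [sq_nonneg (1 + α * r)]
      have hn1 : (1 : ℝ) ≤ (n : ℝ) - 1 := by
        have : (2 : ℝ) ≤ (n : ℝ) := by exact_mod_cast hn
        linarith
      have hr3 : (0 : ℝ) < r ^ 3 := by positivity
      have hcoef : 0 < 2 * ((n : ℝ) - 1) / r ^ 3 := by positivity
      have hα3 : 2 * α ^ 3 ≤ 0 := by nlinarith [sq_nonneg α]
      nlinarith [mul_pos hcoef hpos]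
    have := mul_neg_of_pos_of_neg hC hbr
    exact mul_neg_of_neg_of_pos this (Real.exp_pos _)
  · apply strictAntiOn_of_deriv_neg (convex_Ici 1)
    · intro x hx
      have hx0 : x ≠ 0 := ne_of_gt (lt_of_lt_of_le one_pos hx)
      exact ((key x hx0).differentiableAt).continuousAt.continuousWithinAt
    · intro x hx
      rw [interior_Ici] at hx
      have hx1 : (1 : ℝ) ≤ x := le_of_lt hx
      have hd := (key x (ne_of_gt (lt_of_lt_of_le one_pos hx1))).deriv
      rw [hd]
      have hpos : 0 < (1 + α * x) ^ 2 - α * x / 2 := by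
        rcases eq_or_lt_of_le hα with heq | hlt
        · subst heq; norm_num
        · nlinarith [sq_nonneg (1 + α * x)]
      have hn1 : (1 : ℝ) ≤ (n : ℝ) - 1 := by
        have : (2 : ℝ) ≤ (n : ℝ) := by exact_mod_cast hn
        linarith
      have hx3 : (0 : ℝ) < x ^ 3 := by positivity
      have hcoef : 0 < 2 * ((n : ℝ) - 1) / x ^ 3 := by positivity
      have hα3 : 2 * α ^ 3 ≤ 0 := by nlinarith [sq_nonneg α]
      have hbr : 2 * α ^ 3 - (2 * ((n : ℝ) - 1) / x ^ 3) * ((1 + α * x) ^ 2 - α * x / 2) < 0 := by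
        nlinarith [mul_pos hcoef hpos]
      exact mul_neg_of_neg_of_pos (mul_neg_of_pos_of_neg hC hbr) (Real.exp_pos _)
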